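/- arXiv:2003.13776 — 2 statements merged into one kernel-verified Lean document; each statement's English description precedes it below -/
import Mathlib

section
/- Let μ be a finite-energy probability measure on ℝ² minimizing I_α as above, P(μ)(z) = (W_α ⋆ μ)(z) + |z|²/2, and C₀ = ∫P(μ)dμ. Then P(μ)(z) ≥ C₀ for every z not in the support of μ. -/
open MeasureTheory Complex
open scoped ENNReal

lemma aux_integrable_dirac {α E : Type*} [MeasurableSpace α] [MeasurableSingletonClass α]
    [NormedAddCommGroup E] (f : α → E) (a : α) : Integrable f (Measure.dirac a) := by
  have h : (fun _ : α => f a) =ᵐ[Measure.dirac a] f := by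
    rw [MeasureTheory.ae_dirac_eq]
    exact Filter.eventually_pure.mpr rfl
  exact (integrable_const (f a)).congr h

lemma aux_isFiniteMeasure_smul {α : Type*} [MeasurableSpace α] (c : ℝ≥0∞) (hc : c ≠ ⊤)
    (μ : Measure α) [IsFiniteMeasure μ] : IsFiniteMeasure (c • μ) := by
  constructor
  rw [Measure.smul_apply, smul_eq_mul]
  exact ENNReal.mul_lt_top hc.lt_top (measure_lt_top μ _)

lemma aux_smul_prod {α β : Type*} [MeasurableSpace α] [MeasurableSpace β]
    (c : ℝ≥0∞) (hc : c ≠ ⊤) (μ : Measure α) (ν : Measure β)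
    [IsFiniteMeasure μ] [IsFiniteMeasure ν] :
    (c • μ).prod ν = c • (μ.prod ν) := by
  haveI := aux_isFiniteMeasure_smul c hc μ
  refine Measure.prod_eq fun s t hs ht => ?_
  simp [Measure.prod_prod, mul_assoc]

lemma aux_prod_smul {α β : Type*} [MeasurableSpace α] [MeasurableSpace β]
    (c : ℝ≥0∞) (hc : c ≠ ⊤) (μ : Measure α) (ν : Measure β)
    [IsFiniteMeasure μ] [IsFiniteMeasure ν] :
    μ.prod (c • ν) = c • (μ.prod ν) := by
  haveI := aux_isFiniteMeasure_smul c hc ν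
  refine Measure.prod_eq fun s t hs ht => ?_
  simp [Measure.prod_prod]
  ring

/-- Second Euler–Lagrange condition: if `μ` is a finite-energy probability
measure minimizing `I_α`, and `C₀ = ∫P(μ) dμ`, then `P(μ)(z) ≥ C₀` at every
point `z` outside the support of `μ`. -/
theorem potential_ge_off_support_at_minimizer
    (α : ℝ) (hα : -1 < α) (hα' : α < 1)
    (W : ℂ → ℝ)
    (hW : ∀ z : ℂ, z ≠ 0 →
      W z = -Real.log (‖z‖) + α * z.re ^ 2 / (‖z‖) ^ 2)
    (Iα : Measure ℂ → ℝ)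
    (hI : ∀ μ : Measure ℂ, Iα μ =
      (∫ p : ℂ × ℂ, W (p.1 - p.2) ∂(μ.prod μ)) + ∫ z, (‖z‖) ^ 2 ∂μ)
    (μ : Measure ℂ) [IsProbabilityMeasure μ]
    (hμW : Integrable (fun p : ℂ × ℂ => W (p.1 - p.2)) (μ.prod μ))
    (hμconf : Integrable (fun z : ℂ => (‖z‖) ^ 2) μ)
    (hmin : ∀ ν : Measure ℂ, IsProbabilityMeasure ν →
      Integrable (fun p : ℂ × ℂ => W (p.1 - p.2)) (ν.prod ν) →
      Integrable (fun z : ℂ => (‖z‖) ^ 2) ν →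
      Iα μ ≤ Iα ν)
    (P : ℂ → ℝ)
    (hP : ∀ z : ℂ, P z = (∫ w, W (z - w) ∂μ) + (‖z‖) ^ 2 / 2)
    (C₀ : ℝ) (hC₀ : C₀ = ∫ z, P z ∂μ) :
    ∀ z : ℂ, (∃ U : Set ℂ, IsOpen U ∧ z ∈ U ∧ μ U = 0) → C₀ ≤ P z := by
  rintro z ⟨U, hU, hzU, hμU⟩
  obtain ⟨r, hr, hball⟩ := Metric.isOpen_iff.mp hU z hzU
  -- a.e. lower bound on |z - w|
  have hae : ∀ᵐ w ∂μ, r ≤ ‖z - w‖ := by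
    have h0 : ∀ᵐ w ∂μ, w ∉ U := (measure_eq_zero_iff_ae_notMem (μ := μ)).mp hμU
    filter_upwards [h0] with w hw
    have hwb : w ∉ Metric.ball z r := fun h => hw (hball h)
    rw [Metric.mem_ball, not_lt, Complex.dist_eq] at hwb
    rwa [norm_sub_rev] at hwb
  set g : ℂ → ℝ := fun w =>
    -Real.log (‖z - w‖) + α * (z - w).re ^ 2 / (‖z - w‖) ^ 2 with hg_def
  have hg_meas : Measurable g := by
    apply Measurable.add
    · exact (Real.measurable_log.comp
        (continuous_norm.comp (continuous_const.sub continuous_id)).measurable).neg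
    · apply Measurable.div
      · exact (measurable_const.mul
          (((Complex.continuous_re.comp (continuous_const.sub continuous_id)).pow 2).measurable))
      · exact ((continuous_norm.comp (continuous_const.sub continuous_id)).pow 2).measurable
  set B : ℂ → ℝ := fun w =>
    (|Real.log r| + ‖z‖ + 1 + |α|) + ‖w‖ ^ 2 with hB_def
  have hB_int : Integrable B μ := (integrable_const _).add hμconf
  have hg_bound : ∀ᵐ w ∂μ, ‖g w‖ ≤ B w := by
    filter_upwards [hae] with w hrw
    set x := ‖z - w‖ with hx_def
    have hx : 0 < x := lt_of_lt_of_le hr hrw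
    have hre : (z - w).re ^ 2 ≤ x ^ 2 := by
      have h1 := Complex.abs_re_le_norm (z - w)
      have h2 := abs_nonneg ((z - w).re)
      have h3 := _root_.sq_abs ((z - w).re)
      nlinarith
    have h2 : |α * (z - w).re ^ 2 / x ^ 2| ≤ |α| := by
      rw [abs_div, abs_mul, _root_.abs_of_nonneg (sq_nonneg ((z - w).re)),
        _root_.abs_of_nonneg (sq_nonneg x), div_le_iff₀ (by positivity)]
      nlinarith [abs_nonneg α]
    have hlog : |Real.log x| ≤ |Real.log r| + ‖z‖ + 1 + ‖w‖ ^ 2 := by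
      have hw2 : (0:ℝ) ≤ ‖w‖ ^ 2 := sq_nonneg _
      have hz0 : (0:ℝ) ≤ ‖z‖ := norm_nonneg z
      rcases le_or_gt x 1 with h1 | h1
      · have hnp : Real.log x ≤ 0 := Real.log_nonpos hx.le h1
        have hlr : Real.log r ≤ Real.log x := Real.log_le_log hr hrw
        rw [_root_.abs_of_nonpos hnp]
        have : -Real.log r ≤ |Real.log r| := neg_le_abs _
        linarith
      · rw [_root_.abs_of_nonneg (Real.log_nonneg h1.le)]
        have h3 : Real.log x ≤ x - 1 := Real.log_le_sub_one_of_pos hx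
        have h4 : x ≤ ‖z‖ + ‖w‖ := by
          have := norm_add_le z (-w)
          simpa [sub_eq_add_neg, hx_def] using this
        have h5 : ‖w‖ ≤ 1 + ‖w‖ ^ 2 := by
          nlinarith [sq_nonneg (‖w‖ - 1)]
        have h6 : (0:ℝ) ≤ |Real.log r| := abs_nonneg _
        linarith
    have : ‖g w‖ = |(-Real.log x) + α * (z - w).re ^ 2 / x ^ 2| := rfl
    rw [this]
    calc |(-Real.log x) + α * (z - w).re ^ 2 / x ^ 2|
        ≤ |(-Real.log x)| + |α * (z - w).re ^ 2 / x ^ 2| := abs_add_le _ _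
      _ ≤ |Real.log x| + |α| := by rw [abs_neg]; linarith
      _ ≤ B w := by rw [hB_def]; dsimp only; linarith
  have hg_int : Integrable g μ := hB_int.mono' hg_meas.aestronglyMeasurable hg_bound
  have hne : ∀ᵐ w ∂μ, z - w ≠ 0 := by
    filter_upwards [hae] with w hw h0
    rw [h0] at hw; simp at hw; linarith
  have hWz_eq : (fun w => W (z - w)) =ᵐ[μ] g := by
    filter_upwards [hne] with w hw
    rw [hW _ hw]
  have hWz_int : Integrable (fun w => W (z - w)) μ := hg_int.congr hWz_eq.symm
  have hWsymm : (fun w => W (w - z)) =ᵐ[μ] (fun w => W (z - w)) := by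
    filter_upwards [hne] with w hw
    have hw' : w - z ≠ 0 := fun h => hw (by rw [show z - w = -(w - z) by ring, h, neg_zero])
    have habs : ‖w - z‖ = ‖z - w‖ := norm_sub_rev w z
    have hre2 : (w - z).re ^ 2 = (z - w).re ^ 2 := by
      simp only [Complex.sub_re]; ring
    rw [hW _ hw', hW _ hw, habs, hre2]
  have hWz'_int : Integrable (fun w => W (w - z)) μ := hWz_int.congr hWsymm.symm
  -- notation
  set E : ℝ := ∫ p : ℂ × ℂ, W (p.1 - p.2) ∂(μ.prod μ) with hE_def
  set K : ℝ := ∫ w, (‖w‖) ^ 2 ∂μ with hK_def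
  set u : ℝ := ∫ w, W (z - w) ∂μ with hu_def
  set W0 : ℝ := W 0 with hW0_def
  -- C₀ = E + K/2
  have hC₀' : C₀ = E + K / 2 := by
    have hint1 : Integrable (fun x : ℂ => ∫ w, W (x - w) ∂μ) μ := by
      have := hμW.integral_prod_left
      simpa using this
    have hint2 : Integrable (fun x : ℂ => (‖x‖) ^ 2 / 2) μ := hμconf.div_const 2
    have hE_eq : E = ∫ x, ∫ w, W (x - w) ∂μ ∂μ := by
      rw [hE_def, integral_prod _ hμW]
    rw [hC₀]
    calc (∫ x, P x ∂μ)
        = ∫ x, ((∫ w, W (x - w) ∂μ) + (‖x‖) ^ 2 / 2) ∂μ := by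
          apply integral_congr_ae
          filter_upwards with x
          rw [hP]
      _ = (∫ x, ∫ w, W (x - w) ∂μ ∂μ) + ∫ x, (‖x‖) ^ 2 / 2 ∂μ :=
          integral_add hint1 hint2
      _ = E + K / 2 := by rw [← hE_eq, integral_div]
  -- key inequality for each t ∈ (0,1)
  have key : ∀ t : ℝ, 0 < t → t < 1 →
      0 ≤ (t - 2) * E + 2 * (1 - t) * u + t * W0 + (‖z‖) ^ 2 - K := by
    intro t ht ht1
    set a : ℝ≥0∞ := ENNReal.ofReal (1 - t) with ha_def
    set b : ℝ≥0∞ := ENNReal.ofReal t with hb_def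
    have ha_top : a ≠ ⊤ := ENNReal.ofReal_ne_top
    have hb_top : b ≠ ⊤ := ENNReal.ofReal_ne_top
    have ha_real : a.toReal = 1 - t := ENNReal.toReal_ofReal (by linarith)
    have hb_real : b.toReal = t := ENNReal.toReal_ofReal ht.le
    set δ : Measure ℂ := Measure.dirac z with hδ_def
    set ν : Measure ℂ := a • μ + b • δ with hν_def
    haveI hfa : IsFiniteMeasure (a • μ) := aux_isFiniteMeasure_smul a ha_top μ
    haveI hfb : IsFiniteMeasure (b • δ) := aux_isFiniteMeasure_smul b hb_top δ
    haveI hνprob : IsProbabilityMeasure ν := by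
      constructor
      rw [hν_def, Measure.add_apply, Measure.smul_apply, Measure.smul_apply,
        measure_univ, measure_univ, smul_eq_mul, smul_eq_mul, mul_one, mul_one,
        ha_def, hb_def, ← ENNReal.ofReal_add (by linarith) ht.le]
      norm_num
    -- expand the product measure
    have hprod : ν.prod ν =
        a • (a • μ.prod μ + b • μ.prod δ) + b • (a • δ.prod μ + b • δ.prod δ) := by
      rw [hν_def, Measure.add_prod, aux_smul_prod a ha_top, aux_smul_prod b hb_top,
        Measure.prod_add, Measure.prod_add, aux_prod_smul a ha_top, aux_prod_smul b hb_top,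
        aux_prod_smul a ha_top, aux_prod_smul b hb_top]
    have hμδ : μ.prod δ = μ.map (fun x => (x, z)) := Measure.prod_dirac z
    have hδμ : δ.prod μ = μ.map (Prod.mk z) := Measure.dirac_prod z
    have hδδ : δ.prod δ = Measure.dirac (z, z) := Measure.dirac_prod_dirac
    set F : ℂ × ℂ → ℝ := fun p => W (p.1 - p.2) with hF_def
    -- integrability of F w.r.t. each product piece
    have hFμδ : Integrable F (μ.prod δ) := by
      rw [hμδ]
      exact ((measurableEmbedding_prod_mk_right z).integrable_map_iff).mpr hWz'_int
    have hFδμ : Integrable F (δ.prod μ) := by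
      rw [hδμ]
      exact ((measurableEmbedding_prodMk_left z).integrable_map_iff).mpr hWz_int
    have hFδδ : Integrable F (δ.prod δ) := by
      rw [hδδ]; exact aux_integrable_dirac F (z, z)
    have hFν : Integrable F (ν.prod ν) := by
      rw [hprod]
      exact ((((hμW.smul_measure ha_top).add_measure
        (hFμδ.smul_measure hb_top)).smul_measure ha_top).add_measure
        ((((hFδμ.smul_measure ha_top).add_measure
        (hFδδ.smul_measure hb_top))).smul_measure hb_top))
    -- integrals of F over pieces
    have hIμδ : ∫ p, F p ∂(μ.prod δ) = u := by
      rw [hμδ, (measurableEmbedding_prod_mk_right z).integral_map]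
      exact integral_congr_ae hWsymm
    have hIδμ : ∫ p, F p ∂(δ.prod μ) = u := by
      rw [hδμ, (measurableEmbedding_prodMk_left z).integral_map]
    have hIδδ : ∫ p, F p ∂(δ.prod δ) = W0 := by
      rw [hδδ, integral_dirac]
      simp [hF_def, hW0_def]
    -- total energy integral
    have hIμμ : ∫ p, F p ∂(μ.prod μ) = E := rfl
    have hIF : ∫ p, F p ∂(ν.prod ν) =
        (1 - t) * ((1 - t) * E + t * u) + t * ((1 - t) * u + t * W0) := by
      rw [hprod,
        integral_add_measure
          (((hμW.smul_measure ha_top).add_measure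
            (hFμδ.smul_measure hb_top)).smul_measure ha_top)
          ((((hFδμ.smul_measure ha_top).add_measure
            (hFδδ.smul_measure hb_top))).smul_measure hb_top),
        integral_smul_measure, integral_smul_measure,
        integral_add_measure (hμW.smul_measure ha_top) (hFμδ.smul_measure hb_top),
        integral_add_measure (hFδμ.smul_measure ha_top) (hFδδ.smul_measure hb_top),
        integral_smul_measure, integral_smul_measure, integral_smul_measure,
        integral_smul_measure, hIμμ, hIμδ, hIδμ, hIδδ, ha_real, hb_real]
      simp [smul_eq_mul]
    -- confinement integral
    have hconfδ : Integrable (fun w : ℂ => (‖w‖) ^ 2) δ :=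
      aux_integrable_dirac _ z
    have hconfν : Integrable (fun w : ℂ => (‖w‖) ^ 2) ν :=
      (hμconf.smul_measure ha_top).add_measure (hconfδ.smul_measure hb_top)
    have hIconf : ∫ w, (‖w‖) ^ 2 ∂ν = (1 - t) * K + t * (‖z‖) ^ 2 := by
      rw [hν_def, integral_add_measure (hμconf.smul_measure ha_top)
        (hconfδ.smul_measure hb_top), integral_smul_measure, integral_smul_measure,
        hδ_def, integral_dirac, ha_real, hb_real]
      rfl
    -- use minimality
    have hle := hmin ν hνprob hFν hconfν
    rw [hI μ, hI ν] at hle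
    rw [hIF, hIconf] at hle
    have hEK : (∫ p : ℂ × ℂ, W (p.1 - p.2) ∂(μ.prod μ)) = E := rfl
    have hKK : (∫ w, (‖w‖) ^ 2 ∂μ) = K := rfl
    rw [hEK, hKK] at hle
    nlinarith [hle, ht]
  -- take the limit t → 0⁺
  have hlim : Filter.Tendsto
      (fun t : ℝ => (t - 2) * E + 2 * (1 - t) * u + t * W0 + (‖z‖) ^ 2 - K)
      (nhdsWithin 0 (Set.Ioi 0))
      (nhds ((0 - 2) * E + 2 * (1 - 0) * u + 0 * W0 + (‖z‖) ^ 2 - K)) := by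
    apply Filter.Tendsto.mono_left _ nhdsWithin_le_nhds
    have hc : Continuous fun t : ℝ =>
        (t - 2) * E + 2 * (1 - t) * u + t * W0 + (‖z‖) ^ 2 - K := by
      fun_prop
    exact hc.tendsto 0
  have hev : ∀ᶠ t in nhdsWithin (0:ℝ) (Set.Ioi 0),
      0 ≤ (t - 2) * E + 2 * (1 - t) * u + t * W0 + (‖z‖) ^ 2 - K := by
    filter_upwards [Ioo_mem_nhdsGT_of_mem (Set.mem_Ico.mpr ⟨le_refl (0:ℝ), one_pos⟩)]
      with t ht
    exact key t ht.1 ht.2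
  have hfinal : 0 ≤ (0 - 2) * E + 2 * (1 - 0) * u + 0 * W0 + (‖z‖) ^ 2 - K :=
    ge_of_tendsto hlim hev
  rw [hP z, ← hu_def, hC₀']
  linarith
end

section
/- As α → 1⁻, the normalized uniform measure on the region enclosed by the ellipse with horizontal semi-axis √(1−α) and vertical semi-axis √(1+α) converges weakly-* (as finite Radon measures on ℝ²) to the semicircle law on the vertical axis, i.e., to the measure (1/π)√(2−y²) χ_{[−√2, √2]}(y) dy supported on the segment {0} × [−√2, √2]. -/
open MeasureTheory Complex

noncomputable def Lmap (a b : ℝ) : ℂ →L[ℝ] ℂ :=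
  LinearMap.toContinuousLinearMap
  { toFun := fun z => ⟨a * z.re, b * z.im⟩
    map_add' := by intro z w; apply Complex.ext <;> simp <;> ring
    map_smul' := by intro c z; apply Complex.ext <;> simp <;> ring }

@[simp] lemma Lmap_apply (a b : ℝ) (z : ℂ) : Lmap a b z = ⟨a * z.re, b * z.im⟩ := rfl

lemma Lmap_det (a b : ℝ) : (Lmap a b).det = a * b := by
  have : (Lmap a b).det = LinearMap.det ((Lmap a b) : ℂ →ₗ[ℝ] ℂ) := rfl
  rw [this, ← LinearMap.det_toMatrix Complex.basisOneI, Matrix.det_fin_two]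
  simp [LinearMap.toMatrix_apply, Complex.coe_basisOneI_repr, Lmap]

lemma image_eq (α : ℝ) (hα : α ∈ Set.Ioo (-1:ℝ) 1) :
    {z : ℂ | z.re ^ 2 / (1 - α) + z.im ^ 2 / (1 + α) ≤ 1}
      = (Lmap (Real.sqrt (1-α)) (Real.sqrt (1+α))) '' {z : ℂ | z.re^2 + z.im^2 ≤ 1} := by
  obtain ⟨h1, h2⟩ := hα
  have ha : (0:ℝ) < 1 - α := by linarith
  have hb : (0:ℝ) < 1 + α := by linarith
  have ha' : Real.sqrt (1-α) ^ 2 = 1 - α := Real.sq_sqrt ha.le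
  have hb' : Real.sqrt (1+α) ^ 2 = 1 + α := Real.sq_sqrt hb.le
  have has : (0:ℝ) < Real.sqrt (1-α) := Real.sqrt_pos.2 ha
  have hbs : (0:ℝ) < Real.sqrt (1+α) := Real.sqrt_pos.2 hb
  ext z
  constructor
  · intro hz
    refine ⟨⟨z.re / Real.sqrt (1-α), z.im / Real.sqrt (1+α)⟩, ?_, ?_⟩
    · simp only [Set.mem_setOf_eq] at hz ⊢
      rw [div_pow, div_pow, ha', hb']
      exact hz
    · simp only [Lmap_apply]
      apply Complex.ext <;> simp <;> field_simp
  · rintro ⟨w, hw, rfl⟩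
    simp only [Set.mem_setOf_eq, Lmap_apply] at hw ⊢
    rw [mul_pow, mul_pow]
    have e1 : Real.sqrt (1-α) ^ 2 * w.re ^ 2 / (1 - α) = w.re ^ 2 := by
      rw [Real.sq_sqrt ha.le]; field_simp
    have e2 : Real.sqrt (1+α) ^ 2 * w.im ^ 2 / (1 + α) = w.im ^ 2 := by
      rw [Real.sq_sqrt hb.le]; field_simp
    rw [e1, e2]; exact hw

lemma cov (f : ℂ → ℝ) (hf : Continuous f) (α : ℝ) (hα : α ∈ Set.Ioo (-1:ℝ) 1) :
    (∫ z in {z : ℂ | z.re ^ 2 / (1 - α) + z.im ^ 2 / (1 + α) ≤ 1}, f z)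
      = Real.sqrt (1 - α^2) *
        ∫ z in {z : ℂ | z.re^2 + z.im^2 ≤ 1},
          f (Lmap (Real.sqrt (1-α)) (Real.sqrt (1+α)) z) := by
  obtain ⟨h1, h2⟩ := hα
  have ha : (0:ℝ) < 1 - α := by linarith
  have hb : (0:ℝ) < 1 + α := by linarith
  have has : (0:ℝ) < Real.sqrt (1-α) := Real.sqrt_pos.2 ha
  have hbs : (0:ℝ) < Real.sqrt (1+α) := Real.sqrt_pos.2 hb
  have hD : MeasurableSet {z : ℂ | z.re^2 + z.im^2 ≤ 1} := by
    apply measurableSet_le (by fun_prop) measurable_const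
  rw [image_eq α ⟨h1, h2⟩]
  rw [integral_image_eq_integral_abs_det_fderiv_smul volume hD
      (fun x _ => (Lmap (Real.sqrt (1-α)) (Real.sqrt (1+α))).hasFDerivWithinAt)
      ?_ f]
  · have hdet : (Lmap (Real.sqrt (1-α)) (Real.sqrt (1+α))).det
        = Real.sqrt (1-α) * Real.sqrt (1+α) := Lmap_det _ _
    have hsq : Real.sqrt (1-α) * Real.sqrt (1+α) = Real.sqrt (1 - α^2) := by
      rw [← Real.sqrt_mul ha.le]; ring_nf
    have h12 : (0:ℝ) < 1 - α^2 := by nlinarith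
    simp only [hdet, hsq, smul_eq_mul]
    rw [abs_of_pos (Real.sqrt_pos.2 h12), integral_const_mul]
  · intro z hz w hw hzw
    simp only [Lmap_apply, Complex.mk.injEq] at hzw
    apply Complex.ext
    · exact mul_left_cancel₀ has.ne' hzw.1
    · exact mul_left_cancel₀ hbs.ne' hzw.2

lemma sq_le_measure (c : ℝ) : (volume {x : ℝ | x^2 ≤ c}).toReal = 2 * Real.sqrt c := by
  rcases le_or_gt 0 c with hc | hc
  · have : {x : ℝ | x^2 ≤ c} = Set.Icc (-Real.sqrt c) (Real.sqrt c) := by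
      ext x
      simp only [Set.mem_setOf_eq, Set.mem_Icc]
      constructor
      · intro h
        constructor <;> nlinarith [Real.sq_sqrt hc, Real.sqrt_nonneg c, sq_nonneg (x - Real.sqrt c), sq_nonneg (x + Real.sqrt c)]
      · rintro ⟨h1, h2⟩
        nlinarith [Real.sq_sqrt hc, Real.sqrt_nonneg c]
    rw [this, Real.volume_Icc, ENNReal.toReal_ofReal (by nlinarith [Real.sqrt_nonneg c])]
    ring
  · have : {x : ℝ | x^2 ≤ c} = (∅ : Set ℝ) := by
      ext x; simp only [Set.mem_setOf_eq, Set.mem_empty_iff_false, iff_false]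
      nlinarith [sq_nonneg x]
    rw [this, Real.sqrt_eq_zero_of_nonpos hc.le]
    simp

lemma slice2 (g : ℝ → ℝ) (hg : Continuous g) (M : ℝ) (hbd : ∀ y, |g y| ≤ M) :
    ∫ z in {z : ℂ | z.re^2 + z.im^2 ≤ 1}, g (Real.sqrt 2 * z.im)
      = ∫ y in (-Real.sqrt 2)..(Real.sqrt 2), g y * Real.sqrt (2 - y ^ 2) := by
  set S : Set (ℝ × ℝ) := {p | p.1^2 + p.2^2 ≤ 1} with hS
  have hSm : MeasurableSet S := measurableSet_le (by fun_prop) measurable_const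
  have hDpre : {z : ℂ | z.re^2 + z.im^2 ≤ 1} = Complex.measurableEquivRealProd ⁻¹' S := rfl
  -- transfer to ℝ × ℝ
  rw [hDpre, show (fun z : ℂ => g (Real.sqrt 2 * z.im))
      = (fun z : ℂ => (fun p : ℝ × ℝ => g (Real.sqrt 2 * p.2))
          (Complex.measurableEquivRealProd z)) from rfl]
  rw [Complex.volume_preserving_equiv_real_prod.setIntegral_preimage_emb
      Complex.measurableEquivRealProd.measurableEmbedding
      (fun p : ℝ × ℝ => g (Real.sqrt 2 * p.2)) S]
  -- integrability on S
  have hSfin : volume S < ⊤ := by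
    refine lt_of_le_of_lt (measure_mono ?_) (isCompact_closedBall (0 : ℝ × ℝ) 1).measure_lt_top
    intro p hp
    simp only [hS, Set.mem_setOf_eq] at hp
    simp only [Metric.mem_closedBall, dist_zero_right, Prod.norm_def, Real.norm_eq_abs,
      max_le_iff]
    constructor <;> [skip; skip] <;> rw [abs_le] <;> constructor <;> nlinarith [sq_nonneg p.1, sq_nonneg p.2]
  have hint : IntegrableOn (fun p : ℝ × ℝ => g (Real.sqrt 2 * p.2)) S volume := by
    refine Measure.integrableOn_of_bounded hSfin.ne ?_ (M := M) ?_
    · exact (hg.comp (by fun_prop)).aestronglyMeasurable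
    · filter_upwards with p using by simpa [Real.norm_eq_abs] using hbd _
  rw [← integral_indicator hSm]
  have hind : Integrable (S.indicator fun p : ℝ × ℝ => g (Real.sqrt 2 * p.2)) volume :=
    hint.integrable_indicator hSm
  rw [Measure.volume_eq_prod ℝ ℝ] at hind ⊢
  rw [integral_prod_symm _ hind]
  -- inner integral
  have hinner : ∀ y : ℝ, (∫ x : ℝ, S.indicator (fun p : ℝ × ℝ => g (Real.sqrt 2 * p.2)) (x, y))
      = g (Real.sqrt 2 * y) * (2 * Real.sqrt (1 - y^2)) := by
    intro y
    have : (fun x : ℝ => S.indicator (fun p : ℝ × ℝ => g (Real.sqrt 2 * p.2)) (x, y))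
        = ({x : ℝ | x^2 ≤ 1 - y^2}).indicator (fun _ => g (Real.sqrt 2 * y)) := by
      funext x
      by_cases h : (x, y) ∈ S
      · rw [Set.indicator_of_mem h, Set.indicator_of_mem]
        simp only [hS, Set.mem_setOf_eq] at h ⊢; linarith
      · rw [Set.indicator_of_notMem h, Set.indicator_of_notMem]
        simp only [hS, Set.mem_setOf_eq] at h ⊢; intro hc; exact h (by linarith)
    rw [this, integral_indicator (measurableSet_le (by fun_prop) measurable_const),
      setIntegral_const, smul_eq_mul, mul_comm, measureReal_def, sq_le_measure]
  simp only [hinner]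
  -- restrict to [-1,1]
  have hsupp : ∀ y : ℝ, y ∉ Set.Ioc (-1:ℝ) 1 →
      g (Real.sqrt 2 * y) * (2 * Real.sqrt (1 - y^2)) = 0 := by
    intro y hy
    simp only [Set.mem_Ioc, not_and_or, not_lt, not_le] at hy
    have : 1 - y^2 ≤ 0 := by rcases hy with h | h <;> nlinarith
    rw [Real.sqrt_eq_zero_of_nonpos this]; ring
  rw [← setIntegral_eq_integral_of_forall_compl_eq_zero hsupp,
    ← intervalIntegral.integral_of_le (by norm_num : (-1:ℝ) ≤ 1)]
  -- substitution
  have h2 : (0:ℝ) < Real.sqrt 2 := Real.sqrt_pos.2 two_pos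
  have key : ∀ y : ℝ, g (Real.sqrt 2 * y) * (2 * Real.sqrt (1 - y^2))
      = Real.sqrt 2 * (g (Real.sqrt 2 * y) * Real.sqrt (2 - (Real.sqrt 2 * y)^2)) := by
    intro y
    have : 2 - (Real.sqrt 2 * y)^2 = 2 * (1 - y^2) := by
      rw [mul_pow, Real.sq_sqrt (by norm_num : (0:ℝ) ≤ 2)]; ring
    rw [this, Real.sqrt_mul (by norm_num : (0:ℝ) ≤ 2)]
    have hss : Real.sqrt 2 ^ 2 = 2 := Real.sq_sqrt (by norm_num)
    linear_combination (-(g (Real.sqrt 2 * y) * Real.sqrt (1 - y^2))) * hss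
  simp only [key]
  rw [intervalIntegral.integral_const_mul,
    intervalIntegral.integral_comp_mul_left (fun u => g u * Real.sqrt (2 - u^2)) h2.ne']
  rw [smul_eq_mul, ← mul_assoc, mul_inv_cancel₀ h2.ne', one_mul, mul_one, mul_neg_one]


/-- As `α → 1⁻`, the normalized uniform measure on the ellipse region
`{x²/(1−α) + y²/(1+α) ≤ 1}` converges weakly-* to the semicircle law
`(1/π)√(2−y²) χ_{[−√2,√2]}(y) dy` on the vertical axis. -/
theorem ellipse_measures_tendsto_semicircle
    (f : ℂ → ℝ) (hf_cont : Continuous f) (hf_bdd : ∃ M : ℝ, ∀ z : ℂ, |f z| ≤ M) :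
    Filter.Tendsto
      (fun α : ℝ =>
        (∫ z in {z : ℂ | z.re ^ 2 / (1 - α) + z.im ^ 2 / (1 + α) ≤ 1}, f z) /
          (Real.pi * Real.sqrt (1 - α ^ 2)))
      (nhdsWithin 1 (Set.Ioo (-1 : ℝ) 1))
      (nhds ((1 / Real.pi) *
        ∫ y in (-Real.sqrt 2)..Real.sqrt 2, f (y • Complex.I) * Real.sqrt (2 - y ^ 2))) := by
  obtain ⟨M, hM⟩ := hf_bdd
  set D : Set ℂ := {z : ℂ | z.re^2 + z.im^2 ≤ 1} with hD
  have hDm : MeasurableSet D := measurableSet_le (by fun_prop) measurable_const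
  have hDfin : volume D < ⊤ := by
    refine lt_of_le_of_lt (measure_mono ?_) (isCompact_closedBall (0 : ℂ) 1).measure_lt_top
    intro z hz
    simp only [hD, Set.mem_setOf_eq] at hz
    simp only [Metric.mem_closedBall, dist_zero_right]
    have h1 : ‖z‖ ^ 2 = z.re^2 + z.im^2 := by
      rw [Complex.sq_norm, Complex.normSq_apply]; ring
    nlinarith [norm_nonneg z]
  set l := nhdsWithin (1:ℝ) (Set.Ioo (-1 : ℝ) 1) with hl
  -- limits of the scaling factors
  have c1 : Filter.Tendsto (fun α : ℝ => Real.sqrt (1 - α)) (nhds 1) (nhds 0) := by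
    have hc : Continuous fun α : ℝ => Real.sqrt (1-α) :=
      Real.continuous_sqrt.comp (by continuity)
    simpa using hc.tendsto 1
  have c2 : Filter.Tendsto (fun α : ℝ => Real.sqrt (1 + α)) (nhds 1) (nhds (Real.sqrt 2)) := by
    have hc : Continuous fun α : ℝ => Real.sqrt (1+α) :=
      Real.continuous_sqrt.comp (by continuity)
    have := hc.tendsto 1
    norm_num at this
    exact this
  -- dominated convergence
  have hmain : Filter.Tendsto
      (fun α : ℝ => ∫ z in D, f (Lmap (Real.sqrt (1-α)) (Real.sqrt (1+α)) z)) l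
      (nhds (∫ z in D, f ((Real.sqrt 2 * z.im) • Complex.I))) := by
    apply tendsto_integral_filter_of_dominated_convergence (fun _ => M)
    · exact Filter.Eventually.of_forall fun α =>
        (hf_cont.comp (Lmap _ _).continuous).aestronglyMeasurable
    · exact Filter.Eventually.of_forall fun α =>
        Filter.Eventually.of_forall fun z => by simpa [Real.norm_eq_abs] using hM _
    · exact integrableOn_const hDfin.ne
    · refine Filter.Eventually.of_forall fun z => ?_
      have hz : Filter.Tendsto (fun α : ℝ => Lmap (Real.sqrt (1-α)) (Real.sqrt (1+α)) z)
          (nhds 1) (nhds ((Real.sqrt 2 * z.im) • Complex.I)) := by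
        have h1 : Filter.Tendsto (fun α : ℝ =>
            ((Real.sqrt (1-α) * z.re : ℝ) : ℂ) + ((Real.sqrt (1+α) * z.im : ℝ) : ℂ) * Complex.I)
            (nhds 1)
            (nhds (((0 * z.re : ℝ) : ℂ) + ((Real.sqrt 2 * z.im : ℝ) : ℂ) * Complex.I)) := by
          refine Filter.Tendsto.add ?_ ?_
          · exact (Complex.continuous_ofReal.tendsto _).comp (c1.mul tendsto_const_nhds)
          · exact ((Complex.continuous_ofReal.tendsto _).comp
              (c2.mul tendsto_const_nhds)).mul tendsto_const_nhds
        have e1 : ∀ a b : ℝ, Lmap a b z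
            = ((a * z.re : ℝ) : ℂ) + ((b * z.im : ℝ) : ℂ) * Complex.I := by
          intro a b; apply Complex.ext <;> simp
        have e2 : (((0 * z.re : ℝ) : ℂ) + ((Real.sqrt 2 * z.im : ℝ) : ℂ) * Complex.I)
            = (Real.sqrt 2 * z.im) • Complex.I := by
          apply Complex.ext <;> simp
        rw [← e2]
        simpa only [e1] using h1
      exact (hf_cont.tendsto _).comp (hz.mono_left nhdsWithin_le_nhds)
  have hmain' := hmain.const_mul (1 / Real.pi)
  -- identify the limit value
  have hslice : (∫ z in D, f ((Real.sqrt 2 * z.im) • Complex.I))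
      = ∫ y in (-Real.sqrt 2)..Real.sqrt 2, f (y • Complex.I) * Real.sqrt (2 - y ^ 2) := by
    have := slice2 (fun y : ℝ => f (y • Complex.I))
      (hf_cont.comp (by continuity)) M (fun y => hM _)
    simpa using this
  rw [hslice] at hmain'
  -- identify the functions eventually
  refine Filter.Tendsto.congr' ?_ hmain'
  filter_upwards [self_mem_nhdsWithin] with α hα
  have hcov := cov f hf_cont α hα
  obtain ⟨h1, h2⟩ := hα
  have h12 : (0:ℝ) < 1 - α^2 := by nlinarith
  have hs : Real.sqrt (1 - α^2) ≠ 0 := (Real.sqrt_pos.2 h12).ne'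
  rw [hcov]
  field_simp
  ring
end
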